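/- For every n ≥ 2, |P_up^{(0,0)}(n)| + |P_up^{(1,0)}(n)| + |P_up^{(1,2)}(n)| + |P_up^{(0,2)}(n)| = A_n + 6, where A_n = |P_up(n)| is the total number of upward patterns of size n occurring in T. -/

import Mathlib

/-- Whether the unit triangle at row `r`, column `c` of the Sierpiński triangle is filled:
upward units `(r, 2j)` are filled iff `choose r j` is odd; downward units are unfilled. -/
def filled (r c : ℕ) : Bool :=
  decide (c % 2 = 0 ∧ Nat.choose r (c / 2) % 2 = 1)

/-- The upward pattern of size `n` at upward position `(r, c)`. -/
def upPattern (n r c : ℕ) : ℕ × ℕ → Bool := fun q =>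
  if q.1 < n ∧ q.2 ≤ 2 * q.1 then filled (r + q.1) (c + q.2) else false

/-- The set of all upward patterns of size `n` occurring in the Sierpiński triangle. -/
def Pup (n : ℕ) : Set (ℕ × ℕ → Bool) :=
  { p | ∃ r c : ℕ, c % 2 = 0 ∧ c ≤ 2 * r ∧ p = upPattern n r c }

/-- The downward pattern of size `n` at downward position `(r, c)`. -/
def downPattern (n r c : ℕ) : ℕ × ℕ → Bool := fun q =>
  if q.1 < n ∧ q.2 ≤ 2 * (n - 1 - q.1) then filled (r + q.1) (c + 2 * q.1 + q.2) else false

/-- The set of all downward patterns of size `n` occurring in the Sierpiński triangle. -/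
def Pdown (n : ℕ) : Set (ℕ × ℕ → Bool) :=
  { p | ∃ r c : ℕ, c % 2 = 1 ∧ c + 2 * (n - 1) ≤ 2 * r ∧ p = downPattern n r c }

/-- The top-cut pattern of size `n` at upward position `(r, c)` (apex unit removed). -/
def topCutPattern (n r c : ℕ) : ℕ × ℕ → Bool := fun q =>
  if 1 ≤ q.1 ∧ q.1 < n ∧ q.2 ≤ 2 * q.1 then filled (r + q.1) (c + q.2) else false

/-- The set of all top-cut patterns of size `n` occurring in the Sierpiński triangle. -/
def PtopCut (n : ℕ) : Set (ℕ × ℕ → Bool) :=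
  { p | ∃ r c : ℕ, c % 2 = 0 ∧ c ≤ 2 * r ∧ p = topCutPattern n r c }

/-- The bottom-cut pattern of size `n` at upward position `(r, c)`
(both bottom corner units removed). -/
def botCutPattern (n r c : ℕ) : ℕ × ℕ → Bool := fun q =>
  if (q.1 < n ∧ q.2 ≤ 2 * q.1) ∧ ¬(q.1 = n - 1 ∧ (q.2 = 0 ∨ q.2 = 2 * (n - 1)))
  then filled (r + q.1) (c + q.2) else false

/-- The set of all bottom-cut patterns of size `n` occurring in the Sierpiński triangle. -/
def PbotCut (n : ℕ) : Set (ℕ × ℕ → Bool) :=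
  { p | ∃ r c : ℕ, c % 2 = 0 ∧ c ≤ 2 * r ∧ p = botCutPattern n r c }

/-- The fully-cut pattern of size `n` at upward position `(r, c)`
(all three corner units removed). -/
def fullyCutPattern (n r c : ℕ) : ℕ × ℕ → Bool := fun q =>
  if (q.1 < n ∧ q.2 ≤ 2 * q.1) ∧ q ≠ (0, 0) ∧ ¬(q.1 = n - 1 ∧ (q.2 = 0 ∨ q.2 = 2 * (n - 1)))
  then filled (r + q.1) (c + q.2) else false

/-- The set of all fully-cut patterns of size `n` occurring in the Sierpiński triangle. -/
def PfullyCut (n : ℕ) : Set (ℕ × ℕ → Bool) :=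
  { p | ∃ r c : ℕ, c % 2 = 0 ∧ c ≤ 2 * r ∧ p = fullyCutPattern n r c }

/-- Upward patterns of size `m` occurring inside the approximation `T_N`
(rows `0, …, 2^N - 1`). -/
def PupN (N m : ℕ) : Set (ℕ × ℕ → Bool) :=
  { p | ∃ r c : ℕ, c % 2 = 0 ∧ c ≤ 2 * r ∧ r + m ≤ 2 ^ N ∧ p = upPattern m r c }

/-- Upward patterns of size `n` at positions with `r ≡ ρ [MOD 2]` and `c ≡ γ [MOD 4]`. -/
def PupRC (n ρ γ : ℕ) : Set (ℕ × ℕ → Bool) :=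
  { p | ∃ r c : ℕ, c % 2 = 0 ∧ c ≤ 2 * r ∧ r % 2 = ρ ∧ c % 4 = γ ∧ p = upPattern n r c }

/-- Downward patterns of size `n` at positions with `r ≡ ρ [MOD 2]` and `c ≡ γ [MOD 4]`. -/
def PdownRC (n ρ γ : ℕ) : Set (ℕ × ℕ → Bool) :=
  { p | ∃ r c : ℕ, c % 2 = 1 ∧ c + 2 * (n - 1) ≤ 2 * r ∧ r % 2 = ρ ∧ c % 4 = γ ∧
      p = downPattern n r c }

/-- Top-cut patterns of size `n` at positions with `r ≡ ρ [MOD 2]` and `c ≡ γ [MOD 4]`. -/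
def PtopCutRC (n ρ γ : ℕ) : Set (ℕ × ℕ → Bool) :=
  { p | ∃ r c : ℕ, c % 2 = 0 ∧ c ≤ 2 * r ∧ r % 2 = ρ ∧ c % 4 = γ ∧ p = topCutPattern n r c }

/-- Fully-cut patterns of size `n` at positions with `r ≡ ρ [MOD 2]` and `c ≡ γ [MOD 4]`. -/
def PfullyCutRC (n ρ γ : ℕ) : Set (ℕ × ℕ → Bool) :=
  { p | ∃ r c : ℕ, c % 2 = 0 ∧ c ≤ 2 * r ∧ r % 2 = ρ ∧ c % 4 = γ ∧ p = fullyCutPattern n r c }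

/-- The everywhere-unfilled upward pattern. -/
def blankUp : ℕ × ℕ → Bool := fun _ => false

/-- The upward pattern that is filled exactly at the apex `(0, 0)`. -/
def topUp : ℕ × ℕ → Bool := fun q => decide (q = (0, 0))

/-- The size-`N` upward pattern that is filled exactly at the bottom-left corner `(N-1, 0)`. -/
def botleftUp (N : ℕ) : ℕ × ℕ → Bool := fun q => decide (q = (N - 1, 0))

/-- The size-`N` upward pattern filled exactly at the bottom-right corner `(N-1, 2(N-1))`. -/
def botrightUp (N : ℕ) : ℕ × ℕ → Bool := fun q => decide (q = (N - 1, 2 * (N - 1)))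

/-- The everywhere-unfilled downward pattern. -/
def blankDown : ℕ × ℕ → Bool := fun _ => false

/-- The size-`N` downward pattern filled exactly at the upward units along the top side:
positions `(0, m)` with `m` odd, `1 ≤ m ≤ 2N - 3`. -/
def topsideDown (N : ℕ) : ℕ × ℕ → Bool := fun q =>
  decide (q.1 = 0 ∧ q.2 % 2 = 1 ∧ 1 ≤ q.2 ∧ q.2 ≤ 2 * N - 3)

/-- The size-`N` downward pattern filled exactly at the upward units along the left side:
positions `(k, 1)` with `0 ≤ k ≤ N - 2`. -/
def leftsideDown (N : ℕ) : ℕ × ℕ → Bool := fun q =>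
  decide (q.2 = 1 ∧ q.1 ≤ N - 2)

/-- The size-`N` downward pattern filled exactly at the upward units along the right side:
positions `(k, 2(N-1-k) - 1)` with `0 ≤ k ≤ N - 2`. -/
def rightsideDown (N : ℕ) : ℕ × ℕ → Bool := fun q =>
  decide (q.1 ≤ N - 2 ∧ q.2 = 2 * (N - 1 - q.1) - 1)


def G (r a : ℕ) : Prop := Nat.choose r a % 2 = 1

lemma key : ∀ r a : ℕ, (Nat.choose (2*r) (2*a) % 2 = Nat.choose r a % 2) ∧
    (Nat.choose (2*r) (2*a+1) % 2 = 0) ∧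
    (Nat.choose (2*r+1) (2*a) % 2 = Nat.choose r a % 2) ∧
    (Nat.choose (2*r+1) (2*a+1) % 2 = Nat.choose r a % 2) := by
  intro r
  induction r with
  | zero =>
    intro a
    have h0 : (2*0 : ℕ) = 0 := rfl
    have h0' : (2*0+1 : ℕ) = 1 := rfl
    rw [h0, h0']
    match a with
    | 0 => simp
    | a+1 =>
      have h1 : Nat.choose 0 (2*(a+1)) = 0 := Nat.choose_eq_zero_of_lt (by omega)
      have h2 : Nat.choose 0 (2*(a+1)+1) = 0 := Nat.choose_eq_zero_of_lt (by omega)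
      have h3 : Nat.choose 1 (2*(a+1)) = 0 := Nat.choose_eq_zero_of_lt (by omega)
      have h4 : Nat.choose 1 (2*(a+1)+1) = 0 := Nat.choose_eq_zero_of_lt (by omega)
      have h5 : Nat.choose 0 (a+1) = 0 := Nat.choose_eq_zero_of_lt (by omega)
      refine ⟨?_, ?_, ?_, ?_⟩ <;> omega
  | succ r ih =>
    intro a
    have heven : ∀ b : ℕ, Nat.choose (2*(r+1)) (2*b) % 2 = Nat.choose (r+1) b % 2 := by
      intro b
      match b with
      | 0 => simp
      | b+1 =>
        have p1 : Nat.choose (2*r+1+1) (2*b+1+1)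
            = Nat.choose (2*r+1) (2*b+1) + Nat.choose (2*r+1) (2*b+1+1) :=
          Nat.choose_succ_succ _ _
        have p2 : Nat.choose (r+1) (b+1) = Nat.choose r b + Nat.choose r (b+1) :=
          Nat.choose_succ_succ _ _
        rw [show 2*r+1+1 = 2*(r+1) from by ring, show 2*b+1+1 = 2*(b+1) from by ring] at p1
        have i1 := (ih b).2.2.2
        have i2 := (ih (b+1)).2.2.1
        omega
    have hodd : ∀ b : ℕ, Nat.choose (2*(r+1)) (2*b+1) % 2 = 0 := by
      intro b
      have p1 : Nat.choose (2*r+1+1) (2*b+1)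
          = Nat.choose (2*r+1) (2*b) + Nat.choose (2*r+1) (2*b+1) :=
        Nat.choose_succ_succ _ _
      have e1 : 2*(r+1) = 2*r+1+1 := by ring
      have i1 := (ih b).2.2.1
      have i2 := (ih b).2.2.2
      rw [e1]
      omega
    refine ⟨heven a, hodd a, ?_, ?_⟩
    · match a with
      | 0 => simp
      | b+1 =>
        have p1 : Nat.choose (2*(r+1)+1) (2*b+1+1)
            = Nat.choose (2*(r+1)) (2*b+1) + Nat.choose (2*(r+1)) (2*b+1+1) :=
          Nat.choose_succ_succ _ _
        rw [show 2*b+1+1 = 2*(b+1) from by ring] at p1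
        have i1 := hodd b
        have i2 := heven (b+1)
        omega
    · have p1 : Nat.choose (2*(r+1)+1) (2*a+1)
          = Nat.choose (2*(r+1)) (2*a) + Nat.choose (2*(r+1)) (2*a+1) :=
        Nat.choose_succ_succ _ _
      have i1 := heven a
      have i2 := hodd a
      omega

lemma g_ee {S B : ℕ} : G (2*S) (2*B) ↔ G S B := by unfold G; rw [(key S B).1]
lemma g_eo {S B : ℕ} : ¬ G (2*S) (2*B+1) := by unfold G; rw [(key S B).2.1]; omega
lemma g_oe {S B : ℕ} : G (2*S+1) (2*B) ↔ G S B := by unfold G; rw [(key S B).2.2.1]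
lemma g_oo {S B : ℕ} : G (2*S+1) (2*B+1) ↔ G S B := by unfold G; rw [(key S B).2.2.2]

lemma evenrow {R A : ℕ} (hR : R % 2 = 0) (h : G R A) : A % 2 = 0 := by
  obtain ⟨S, rfl⟩ : ∃ S, R = 2*S := ⟨R/2, by omega⟩
  by_contra hA
  obtain ⟨B, rfl⟩ : ∃ B, A = 2*B+1 := ⟨A/2, by omega⟩
  exact g_eo h

lemma pair {R A : ℕ} (hR : R % 2 = 1) (hA : A % 2 = 0) : G R A ↔ G R (A+1) := by
  obtain ⟨S, rfl⟩ : ∃ S, R = 2*S+1 := ⟨R/2, by omega⟩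
  obtain ⟨B, rfl⟩ : ∃ B, A = 2*B := ⟨A/2, by omega⟩
  rw [g_oe, g_oo]

lemma child_even {R A : ℕ} (hR : R % 2 = 0) (h : G R A) : G (R+1) A ∧ G (R+1) (A+1) := by
  have hA := evenrow hR h
  obtain ⟨S, rfl⟩ : ∃ S, R = 2*S := ⟨R/2, by omega⟩
  obtain ⟨B, rfl⟩ : ∃ B, A = 2*B := ⟨A/2, by omega⟩
  rw [g_ee] at h
  exact ⟨g_oe.mpr h, g_oo.mpr h⟩

/-- going up from an odd row to the even row above, at an even column -/
lemma row_up {R A : ℕ} (hR : R % 2 = 1) (hA : A % 2 = 0) (h : G R A) : G (R-1) A := by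
  obtain ⟨S, rfl⟩ : ∃ S, R = 2*S+1 := ⟨R/2, by omega⟩
  obtain ⟨B, rfl⟩ : ∃ B, A = 2*B := ⟨A/2, by omega⟩
  simpa [g_ee] using g_oe.mp h

lemma g_self (t : ℕ) : G t t := by unfold G; simp
lemma g_zero (t : ℕ) : G t 0 := by unfold G; simp
lemma not_g_of_lt {t j : ℕ} (h : t < j) : ¬ G t j := by
  unfold G; rw [Nat.choose_eq_zero_of_lt h]; omega

lemma shift : ∀ (p t j : ℕ), t < 2^p → j < 2^p → (G (2^p + t) j ↔ G t j) := by
  intro p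
  induction p with
  | zero =>
    intro t j ht hj
    interval_cases t
    interval_cases j
    simp [G]
  | succ p ih =>
    intro t j ht hj
    have hp : (2:ℕ)^(p+1) = 2*2^p := by rw [pow_succ]; ring
    obtain ⟨t1, rfl | rfl⟩ : ∃ t1, t = 2*t1 ∨ t = 2*t1+1 := ⟨t/2, by omega⟩
    · obtain ⟨j1, rfl | rfl⟩ : ∃ j1, j = 2*j1 ∨ j = 2*j1+1 := ⟨j/2, by omega⟩
      · have e : 2^(p+1) + 2*t1 = 2*(2^p + t1) := by rw [hp]; ring
        rw [e, g_ee, g_ee]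
        exact ih _ _ (by omega) (by omega)
      · have e : 2^(p+1) + 2*t1 = 2*(2^p + t1) := by rw [hp]; ring
        rw [e]
        exact iff_of_false g_eo g_eo
    · have e : 2^(p+1) + (2*t1+1) = 2*(2^p + t1)+1 := by rw [hp]; ring
      obtain ⟨j1, rfl | rfl⟩ : ∃ j1, j = 2*j1 ∨ j = 2*j1+1 := ⟨j/2, by omega⟩
      · rw [e, g_oe, g_oe]
        exact ih _ _ (by omega) (by omega)
      · rw [e, g_oo, g_oo]
        exact ih _ _ (by omega) (by omega)

lemma shift2 : ∀ (p t j : ℕ), t < 2^p → j < 2^p → (G (2^p + t) (2^p + j) ↔ G t j) := by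
  intro p
  induction p with
  | zero =>
    intro t j ht hj
    interval_cases t
    interval_cases j
    simp [G]
  | succ p ih =>
    intro t j ht hj
    have hp : (2:ℕ)^(p+1) = 2*2^p := by rw [pow_succ]; ring
    obtain ⟨t1, rfl | rfl⟩ : ∃ t1, t = 2*t1 ∨ t = 2*t1+1 := ⟨t/2, by omega⟩
    · obtain ⟨j1, rfl | rfl⟩ : ∃ j1, j = 2*j1 ∨ j = 2*j1+1 := ⟨j/2, by omega⟩
      · have e : 2^(p+1) + 2*t1 = 2*(2^p + t1) := by rw [hp]; ring
        have e2 : 2^(p+1) + 2*j1 = 2*(2^p + j1) := by rw [hp]; ring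
        rw [e, e2, g_ee, g_ee]
        exact ih _ _ (by omega) (by omega)
      · have e : 2^(p+1) + 2*t1 = 2*(2^p + t1) := by rw [hp]; ring
        have e2 : 2^(p+1) + (2*j1+1) = 2*(2^p + j1)+1 := by rw [hp]; ring
        rw [e, e2]
        exact iff_of_false g_eo g_eo
    · have e : 2^(p+1) + (2*t1+1) = 2*(2^p + t1)+1 := by rw [hp]; ring
      obtain ⟨j1, rfl | rfl⟩ : ∃ j1, j = 2*j1 ∨ j = 2*j1+1 := ⟨j/2, by omega⟩
      · have e2 : 2^(p+1) + 2*j1 = 2*(2^p + j1) := by rw [hp]; ring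
        rw [e, e2, g_oe, g_oe]
        exact ih _ _ (by omega) (by omega)
      · have e2 : 2^(p+1) + (2*j1+1) = 2*(2^p + j1)+1 := by rw [hp]; ring
        rw [e, e2, g_oo, g_oo]
        exact ih _ _ (by omega) (by omega)

lemma allone : ∀ (m j : ℕ), j < 2^m → G (2^m - 1) j := by
  intro m
  induction m with
  | zero => intro j hj; interval_cases j; simp [G]
  | succ m ih =>
    intro j hj
    have h1 : (1:ℕ) ≤ 2^m := Nat.one_le_two_pow
    have hp : (2:ℕ)^(m+1) = 2*2^m := by rw [pow_succ]; ring
    have e : 2^(m+1) - 1 = 2*(2^m - 1) + 1 := by omega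
    obtain ⟨j1, rfl | rfl⟩ : ∃ j1, j = 2*j1 ∨ j = 2*j1+1 := ⟨j/2, by omega⟩
    · rw [e, g_oe]; exact ih _ (by omega)
    · rw [e, g_oo]; exact ih _ (by omega)

instance (r a : ℕ) : Decidable (G r a) := inferInstanceAs (Decidable (_ = _))

lemma filled_even (R A : ℕ) : filled R (2*A) = decide (G R A) := by
  unfold filled G
  have h1 : (2*A) % 2 = 0 := by omega
  have h2 : (2*A)/2 = A := by omega
  simp [h1, h2]
  rfl

lemma filled_odd (R c : ℕ) (h : c % 2 = 1) : filled R c = false := by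
  simp only [filled, decide_eq_false_iff_not]
  rintro ⟨h0, -⟩
  omega

lemma up_eval {n r a k b : ℕ} (hk : k < n) (hb : b ≤ k) :
    upPattern n r (2*a) (k, 2*b) = decide (G (r+k) (a+b)) := by
  unfold upPattern
  rw [if_pos (show k < n ∧ 2*b ≤ 2*k from ⟨hk, by omega⟩)]
  rw [show 2*a + 2*b = 2*(a+b) from by ring, filled_even]

lemma up_eval_out {n r c : ℕ} (q : ℕ × ℕ) (h : ¬(q.1 < n ∧ q.2 ≤ 2*q.1)) :
    upPattern n r c q = false := if_neg h

lemma up_eval_oddcol {n r a k m : ℕ} (h : m % 2 = 1) : upPattern n r (2*a) (k, m) = false := by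
  unfold upPattern
  split
  · exact filled_odd _ _ (by omega)
  · rfl

lemma sameG_of_eq {n r a r' a' : ℕ} (h : upPattern n r (2*a) = upPattern n r' (2*a')) :
    ∀ k b, k < n → b ≤ k → (G (r+k) (a+b) ↔ G (r'+k) (a'+b)) := by
  intro k b hk hb
  have h2 := congrFun h (k, 2*b)
  rw [up_eval hk hb, up_eval hk hb] at h2
  exact decide_eq_decide.mp h2

lemma eq_pattern_aux {n r a : ℕ} (q : ℕ×ℕ → Bool)
    (hq0 : ∀ k m, ¬(k < n ∧ m ≤ 2*k) → q (k,m) = false)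
    (hq1 : ∀ k m, m % 2 = 1 → q (k,m) = false)
    (hchar : ∀ k b, k < n → b ≤ k → (G (r+k) (a+b) ↔ q (k, 2*b) = true)) :
    upPattern n r (2*a) = q := by
  funext z
  obtain ⟨k, m⟩ := z
  by_cases hw : k < n ∧ m ≤ 2*k
  · have hm : m % 2 = 0 ∨ m % 2 = 1 := by omega
    rcases hm with he | ho
    · obtain ⟨b, rfl⟩ : ∃ b, m = 2*b := ⟨m/2, by omega⟩
      rw [up_eval hw.1 (by omega)]
      cases hh : q (k, 2*b) with
      | false =>
        simp only [decide_eq_false_iff_not]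
        intro hG
        have := (hchar k b hw.1 (by omega)).mp hG
        rw [hh] at this
        exact Bool.false_ne_true this
      | true =>
        simp only [decide_eq_true_eq]
        exact (hchar k b hw.1 (by omega)).mpr hh
    · rw [up_eval_oddcol ho, hq1 k m ho]
  · rw [up_eval_out _ hw, hq0 k m hw]

lemma char_of_eq {n r a : ℕ} (q : ℕ×ℕ → Bool) (h : q = upPattern n r (2*a))
    (k b : ℕ) (hk : k < n) (hb : b ≤ k) :
    G (r+k) (a+b) ↔ q (k, 2*b) = true := by
  rw [h, up_eval hk hb]
  simp

lemma eq_blank {n r a : ℕ}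
    (hchar : ∀ k b, k < n → b ≤ k → ¬ G (r+k) (a+b)) :
    upPattern n r (2*a) = blankUp := by
  apply eq_pattern_aux
  · intro k m _; rfl
  · intro k m _; rfl
  · intro k b hk hb
    constructor
    · intro hG; exact absurd hG (hchar k b hk hb)
    · intro hh; exact absurd hh (by simp [blankUp])

lemma eq_top {n r a : ℕ} (hn : 1 ≤ n)
    (hchar : ∀ k b, k < n → b ≤ k → (G (r+k) (a+b) ↔ (k = 0 ∧ b = 0))) :
    upPattern n r (2*a) = topUp := by
  apply eq_pattern_aux
  · intro k m hw
    simp only [topUp, decide_eq_false_iff_not, Prod.mk.injEq, not_and]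
    intro hk hm
    exact absurd ⟨by omega, by omega⟩ hw
  · intro k m hm
    simp only [topUp, decide_eq_false_iff_not, Prod.mk.injEq, not_and]
    intro hk hm2
    omega
  · intro k b hk hb
    rw [hchar k b hk hb]
    simp only [topUp, Prod.mk.injEq, decide_eq_true_eq]
    omega

lemma eq_bl {n r a : ℕ} (hn : 1 ≤ n)
    (hchar : ∀ k b, k < n → b ≤ k → (G (r+k) (a+b) ↔ (k = n-1 ∧ b = 0))) :
    upPattern n r (2*a) = botleftUp n := by
  apply eq_pattern_aux
  · intro k m hw
    simp only [botleftUp, decide_eq_false_iff_not, Prod.mk.injEq, not_and]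
    intro hk hm
    exact absurd ⟨by omega, by omega⟩ hw
  · intro k m hm
    simp only [botleftUp, decide_eq_false_iff_not, Prod.mk.injEq, not_and]
    intro hk hm2
    omega
  · intro k b hk hb
    rw [hchar k b hk hb]
    simp only [botleftUp, Prod.mk.injEq, decide_eq_true_eq]
    omega

lemma eq_br {n r a : ℕ} (hn : 1 ≤ n)
    (hchar : ∀ k b, k < n → b ≤ k → (G (r+k) (a+b) ↔ (k = n-1 ∧ b = n-1))) :
    upPattern n r (2*a) = botrightUp n := by
  apply eq_pattern_aux
  · intro k m hw
    simp only [botrightUp, decide_eq_false_iff_not, Prod.mk.injEq, not_and]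
    intro hk hm
    exact absurd ⟨by omega, by omega⟩ hw
  · intro k m hm
    simp only [botrightUp, decide_eq_false_iff_not, Prod.mk.injEq, not_and]
    intro hk hm2
    omega
  · intro k b hk hb
    rw [hchar k b hk hb]
    simp only [botrightUp, Prod.mk.injEq, decide_eq_true_eq]
    omega

lemma bl_parity {R A : ℕ} (h : G (R+1) A) (hup : ¬ G R A) : (R+1) % 2 = A % 2 := by
  rcases (by omega : (R+1) % 2 = 0 ∨ (R+1) % 2 = 1) with h0 | h1
  · have := evenrow h0 h; omega
  · rcases (by omega : A % 2 = 0 ∨ A % 2 = 1) with a0 | a1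
    · have h2 := row_up h1 a0 h
      simp only [Nat.add_sub_cancel] at h2
      exact absurd h2 hup
    · omega

lemma br_parity {R A : ℕ} (h : G (R+1) (A+1)) (hup : ¬ G R A) : (A+1) % 2 = 0 := by
  by_contra hA
  have a0 : A % 2 = 0 := by omega
  rcases (by omega : (R+1) % 2 = 0 ∨ (R+1) % 2 = 1) with h0 | h1
  · have := evenrow h0 h; omega
  · have h2 := (pair h1 a0).mpr h
    have h3 := row_up h1 a0 h2
    simp only [Nat.add_sub_cancel] at h3
    exact absurd h3 hup

lemma top_parity_occ {n r a : ℕ} (hn : 2 ≤ n) (h : topUp = upPattern n r (2*a)) :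
    r % 2 = 1 := by
  have h00 := char_of_eq _ h 0 0 (by omega) (by omega)
  have h10 := char_of_eq _ h 1 0 (by omega) (by omega)
  simp only [Nat.add_zero] at h00 h10
  have t1 : topUp ((0:ℕ), 2*(0:ℕ)) = true := by simp [topUp]
  have t2 : ¬ (topUp ((1:ℕ), 2*(0:ℕ)) = true) := by simp [topUp]
  have hG : G r a := h00.mpr t1
  by_contra hodd
  have h0 : r % 2 = 0 := by omega
  exact t2 (h10.mp (child_even h0 hG).1)

lemma bl_parity_occ {n r a : ℕ} (hn : 2 ≤ n) (h : botleftUp n = upPattern n r (2*a)) :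
    (r+(n-1)) % 2 = a % 2 := by
  have h1 := char_of_eq _ h (n-1) 0 (by omega) (by omega)
  have h2 := char_of_eq _ h (n-2) 0 (by omega) (by omega)
  simp only [Nat.add_zero] at h1 h2
  have t1 : botleftUp n (n-1, 2*(0:ℕ)) = true := by simp [botleftUp]
  have t2 : ¬ (botleftUp n (n-2, 2*(0:ℕ)) = true) := by
    simp only [botleftUp, decide_eq_true_eq, Prod.mk.injEq]
    omega
  have hG : G (r+(n-1)) a := h1.mpr t1
  have hup : ¬ G (r+(n-2)) a := fun hg => t2 (h2.mp hg)
  have e : r+(n-1) = (r+(n-2))+1 := by omega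
  rw [e] at hG ⊢
  exact bl_parity hG hup

lemma br_parity_occ {n r a : ℕ} (hn : 2 ≤ n) (h : botrightUp n = upPattern n r (2*a)) :
    (a+(n-1)) % 2 = 0 := by
  have h1 := char_of_eq _ h (n-1) (n-1) (by omega) (by omega)
  have h2 := char_of_eq _ h (n-2) (n-2) (by omega) (by omega)
  have t1 : botrightUp n (n-1, 2*(n-1)) = true := by simp [botrightUp]
  have t2 : ¬ (botrightUp n (n-2, 2*(n-2)) = true) := by
    simp only [botrightUp, decide_eq_true_eq, Prod.mk.injEq]
    omega
  have hG : G (r+(n-1)) (a+(n-1)) := h1.mpr t1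
  have hup : ¬ G (r+(n-2)) (a+(n-2)) := fun hg => t2 (h2.mp hg)
  have e1 : r+(n-1) = (r+(n-2))+1 := by omega
  have e2 : a+(n-1) = (a+(n-2))+1 := by omega
  rw [e1, e2] at hG
  rw [e2]
  exact br_parity hG hup

/-- Master lemma, case where the row parities differ: all cells except the two
bottom corners are unfilled. -/
lemma m1_upper {n r a r' a' : ℕ} (hn : 2 ≤ n)
    (hs : ∀ k b, k < n → b ≤ k → (G (r+k) (a+b) ↔ G (r'+k) (a'+b)))
    (hr : r % 2 ≠ r' % 2) :
    ∀ k b, k < n → b ≤ k → ¬(k = n-1 ∧ (b = 0 ∨ b = n-1)) → ¬ G (r+k) (a+b) := by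
  have step1 : ∀ k b, k+1 < n → b ≤ k → ¬ G (r+k) (a+b) := by
    intro k b hk hb hG
    have hG' := (hs k b (by omega) hb).mp hG
    have key2 : ∀ (R A R' A' : ℕ), R % 2 = 0 → R' % 2 = 1 → G R A →
        (G (R+1) A ↔ G (R'+1) A') → (G (R+1) (A+1) ↔ G (R'+1) (A'+1)) → False := by
      intro R A R' A' h0 h1 hga i1 i2
      have hc := child_even h0 hga
      have c1 := i1.mp hc.1
      have c2 := i2.mp hc.2
      have e1 := evenrow (by omega : (R'+1) % 2 = 0) c1
      have e2 := evenrow (by omega : (R'+1) % 2 = 0) c2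
      omega
    have i1 := hs (k+1) b (by omega) (by omega)
    have i2 := hs (k+1) (b+1) (by omega) (by omega)
    rw [show r+(k+1) = (r+k)+1 from by omega, show r'+(k+1) = (r'+k)+1 from by omega] at i1 i2
    rw [show a+(b+1) = (a+b)+1 from by omega, show a'+(b+1) = (a'+b)+1 from by omega] at i2
    rcases (by omega : (r+k)%2 = 0 ∧ (r'+k)%2 = 1 ∨ (r+k)%2 = 1 ∧ (r'+k)%2 = 0) with ⟨u,v⟩|⟨u,v⟩
    · exact key2 _ _ _ _ u v hG i1 i2
    · exact key2 _ _ _ _ v u hG' i1.symm i2.symm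
  have step2 : ∀ b, 1 ≤ b → b+1 ≤ n-1 → ¬ G (r+(n-1)) (a+b) := by
    intro b hb1 hb2 hG
    have hG' := (hs (n-1) b (by omega) (by omega)).mp hG
    obtain ⟨b0, rfl⟩ : ∃ b0, b = b0+1 := ⟨b-1, by omega⟩
    have key2 : ∀ (R A R' A' : ℕ), R % 2 = 0 → R' % 2 = 1 → G R (A+1) → G R' (A'+1) →
        (G R A ↔ G R' A') → (G R (A+2) ↔ G R' (A'+2)) → False := by
      intro R A R' A' h0 h1 hga hga' i0 i2
      have hA : (A+1) % 2 = 0 := evenrow h0 hga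
      rcases (by omega : (A'+1) % 2 = 0 ∨ A' % 2 = 0) with hA' | hA'
      · have hstep := (pair h1 hA').mp hga'
        rw [show A'+1+1 = A'+2 from by omega] at hstep
        have h3 := i2.mpr hstep
        have := evenrow h0 h3
        omega
      · have hstep := (pair h1 hA').mpr hga'
        have h3 := i0.mpr hstep
        have := evenrow h0 h3
        omega
    have i0 := hs (n-1) b0 (by omega) (by omega)
    have i2 := hs (n-1) (b0+2) (by omega) (by omega)
    try rw [show a+(b0+1) = (a+b0)+1 from by omega] at hG
    try rw [show a'+(b0+1) = (a'+b0)+1 from by omega] at hG'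
    rw [show a+(b0+2) = (a+b0)+2 from by omega, show a'+(b0+2) = (a'+b0)+2 from by omega] at i2
    rcases (by omega :
        (r+(n-1))%2 = 0 ∧ (r'+(n-1))%2 = 1 ∨ (r+(n-1))%2 = 1 ∧ (r'+(n-1))%2 = 0) with
      ⟨u,v⟩|⟨u,v⟩
    · exact key2 _ _ _ _ u v hG hG' i0 i2
    · exact key2 _ _ _ _ v u hG' hG i0.symm i2.symm
  intro k b hk hb hcor hG
  by_cases hk1 : k+1 < n
  · exact step1 k b hk1 hb hG
  · have hkn : k = n-1 := by omega
    subst hkn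
    exact step2 b (by omega) (by omega) hG

/-- Master lemma, case where row parities agree but column parities differ:
all cells except the apex are unfilled. -/
lemma m2_upper {n r a r' a' : ℕ} (hn : 2 ≤ n)
    (hs : ∀ k b, k < n → b ≤ k → (G (r+k) (a+b) ↔ G (r'+k) (a'+b)))
    (hrr : r % 2 = r' % 2) (haa : a % 2 ≠ a' % 2) :
    ∀ k b, k < n → b ≤ k → ¬(k = 0 ∧ b = 0) → ¬ G (r+k) (a+b) := by
  have stepA : ∀ k b, k < n → b ≤ k → G (r+k) (a+b) → (r+k) % 2 = 1 := by
    intro k b hk hb hG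
    by_contra h0
    have h0 : (r+k) % 2 = 0 := by omega
    have hG' := (hs k b hk hb).mp hG
    have e1 := evenrow h0 hG
    have e2 := evenrow (by omega : (r'+k) % 2 = 0) hG'
    omega
  have spreadR : ∀ k x, k < n → x+1 ≤ k → G (r+k) (a+x) → G (r+k) (a+(x+1)) := by
    intro k x hk hx hG
    have hodd := stepA k x hk (by omega) hG
    have hG' := (hs k x hk (by omega)).mp hG
    have hodd' : (r'+k) % 2 = 1 := by omega
    have i1 := hs k (x+1) hk hx
    rcases (by omega : (a+x) % 2 = 0 ∨ (a'+x) % 2 = 0) with h | h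
    · have hh := (pair hodd h).mp hG
      rw [show (a+x)+1 = a+(x+1) from by omega] at hh
      exact hh
    · have hh := (pair hodd' h).mp hG'
      rw [show (a'+x)+1 = a'+(x+1) from by omega] at hh
      exact i1.mpr hh
  have spreadL : ∀ k x, k < n → x+1 ≤ k → G (r+k) (a+(x+1)) → G (r+k) (a+x) := by
    intro k x hk hx hG
    have hodd := stepA k (x+1) hk hx hG
    have hG' := (hs k (x+1) hk hx).mp hG
    have hodd' : (r'+k) % 2 = 1 := by omega
    have i0 := hs k x hk (by omega)
    rcases (by omega : (a+x) % 2 = 0 ∨ (a'+x) % 2 = 0) with h | h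
    · apply (pair hodd h).mpr
      rw [show (a+x)+1 = a+(x+1) from by omega]
      exact hG
    · apply i0.mpr
      apply (pair hodd' h).mpr
      rw [show (a'+x)+1 = a'+(x+1) from by omega]
      exact hG'
  have full : ∀ k b, k < n → b ≤ k → G (r+k) (a+b) → ∀ c, c ≤ k → G (r+k) (a+c) := by
    intro k b hk hb hG c hc
    rcases le_or_gt b c with h | h
    · have haux : ∀ d, b + d ≤ k → G (r+k) (a+(b+d)) := by
        intro d
        induction d with
        | zero => intro _; simpa using hG
        | succ d ihd =>
          intro hd
          have h1 := spreadR k (b+d) hk (by omega) (ihd (by omega))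
          rw [show b+d+1 = b+(d+1) from by omega] at h1
          exact h1
      have := haux (c - b) (by omega)
      rw [show b+(c-b) = c from by omega] at this
      exact this
    · have haux : ∀ d x, x + d ≤ k → G (r+k) (a+(x+d)) → G (r+k) (a+x) := by
        intro d
        induction d with
        | zero => intro x _ hg; simpa using hg
        | succ d ihd =>
          intro x hd hg
          apply spreadL k x hk (by omega)
          apply ihd (x+1) (by omega)
          rw [show x+1+d = x+(d+1) from by omega]
          exact hg
      have := haux (b - c) c (by omega) (by rw [show c+(b-c) = b from by omega]; exact hG)
      exact this
  have stepA' : ∀ k b, k < n → b ≤ k → G (r'+k) (a'+b) → (r'+k) % 2 = 1 := by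
    intro k b hk hb hG
    by_contra h0
    have h0 : (r'+k) % 2 = 0 := by omega
    have hG2 := (hs k b hk hb).mpr hG
    have e1 := evenrow h0 hG
    have e2 := evenrow (by omega : (r+k) % 2 = 0) hG2
    omega
  intro k b hk hb hc hG
  have hk1 : 1 ≤ k := by
    rcases Nat.eq_zero_or_pos k with h | h
    · exfalso; exact hc ⟨h, by omega⟩
    · exact h
  have hfull := full k b hk hb hG
  rcases (by omega : a % 2 = 0 ∨ a' % 2 = 0) with h | h
  · have h0 : G (r+k) (a+0) := hfull 0 (by omega)
    have hodd := stepA k 0 hk (by omega) h0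
    have hup := row_up hodd (by omega : (a+0) % 2 = 0) h0
    rw [show r+k-1 = r+(k-1) from by omega] at hup
    have hodd2 := stepA (k-1) 0 (by omega) (by omega) hup
    omega
  · have h0 : G (r'+k) (a'+0) := (hs k 0 hk (by omega)).mp (hfull 0 (by omega))
    have hodd := stepA' k 0 hk (by omega) h0
    have hup := row_up hodd (by omega : (a'+0) % 2 = 0) h0
    rw [show r'+k-1 = r'+(k-1) from by omega] at hup
    have hodd2 := stepA' (k-1) 0 (by omega) (by omega) hup
    omega

lemma M_big (n : ℕ) : 4*n + 4 ≤ 2^(n+2) ∧ 2^(n+2) % 2 = 0 := by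
  have h1 : n < 2^n := Nat.lt_two_pow_self
  have h2 : (2:ℕ)^(n+2) = 4*2^n := by rw [pow_succ, pow_succ]; ring
  have h3 : (2:ℕ)^(n+2) = 2*2^(n+1) := by rw [pow_succ]; ring
  omega

lemma blank_mem {n ρ γ : ℕ} (hn : 2 ≤ n) (hρ : ρ ≤ 1) (hγ : γ = 0 ∨ γ = 2) :
    blankUp ∈ PupRC n ρ γ := by
  obtain ⟨hM, hM2⟩ := M_big n
  set M := 2^(n+2) with hMdef
  set δ := (γ/2 + (ρ+n)) % 2 with hδdef
  refine ⟨M+ρ, 2*(ρ+n+δ), by omega, by omega, by omega, by omega, ?_⟩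
  symm
  apply eq_blank
  intro k b hk hb hG
  rw [show M+ρ+k = M+(ρ+k) from by omega] at hG
  have := (shift (n+2) (ρ+k) (ρ+n+δ+b) (by omega) (by omega)).mp hG
  exact not_g_of_lt (by omega) this

lemma top_mem {n γ : ℕ} (hn : 2 ≤ n) (hγ : γ = 0 ∨ γ = 2) :
    topUp ∈ PupRC n 1 γ := by
  obtain ⟨hM, hM2⟩ := M_big n
  set M := 2^(n+2) with hMdef
  set δ := (γ/2 + n) % 2 with hδdef
  refine ⟨M-1, 2*(n+δ), by omega, by omega, by omega, by omega, ?_⟩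
  symm
  apply eq_top (by omega)
  intro k b hk hb
  match k, hb with
  | 0, hb =>
    have hb0 : b = 0 := by omega
    subst hb0
    refine iff_of_true ?_ ⟨rfl, rfl⟩
    rw [show M-1+0 = M-1 from by omega]
    exact allone (n+2) _ (by omega)
  | (k0+1), hb =>
    refine iff_of_false ?_ (by omega)
    intro hG
    rw [show M-1+(k0+1) = M+k0 from by omega] at hG
    have := (shift (n+2) k0 (n+δ+b) (by omega) (by omega)).mp hG
    exact not_g_of_lt (by omega) this

lemma bl_mem_aux {n : ℕ} (hn : 2 ≤ n) (s : ℕ) (hs : n ≤ s) (hs2 : s ≤ n+1) :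
    botleftUp n ∈ PupRC n (s % 2) (2*((s+n+1) % 2)) := by
  obtain ⟨hM, hM2⟩ := M_big n
  set M := 2^(n+2) with hMdef
  refine ⟨M+s, 2*(s+n-1), by omega, by omega, by omega, by omega, ?_⟩
  symm
  apply eq_bl (by omega)
  intro k b hk hb
  have hrw : M+s+k = M+(s+k) := by omega
  rw [hrw]
  by_cases hcb : k = n-1 ∧ b = 0
  · obtain ⟨h1, h2⟩ := hcb
    subst h1; subst h2
    refine iff_of_true ?_ ⟨rfl, rfl⟩
    rw [show s+n-1+0 = s+(n-1) from by omega]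
    exact (shift (n+2) (s+(n-1)) (s+(n-1)) (by omega) (by omega)).mpr (g_self _)
  · refine iff_of_false ?_ hcb
    intro hG
    have := (shift (n+2) (s+k) (s+n-1+b) (by omega) (by omega)).mp hG
    exact not_g_of_lt (by omega) this

lemma br_mem_aux {n : ℕ} (hn : 2 ≤ n) (s : ℕ) (hs : n ≤ s) (hs2 : s ≤ n+1) :
    botrightUp n ∈ PupRC n (s % 2) (2*((n+1) % 2)) := by
  obtain ⟨hM, hM2⟩ := M_big n
  set M := 2^(n+2) with hMdef
  have ha : M - (n-1) + (n-1) = M := by omega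
  refine ⟨M+s, 2*(M-(n-1)), by omega, by omega, by omega, by omega, ?_⟩
  symm
  apply eq_br (by omega)
  intro k b hk hb
  have hrw : M+s+k = M+(s+k) := by omega
  rw [hrw]
  by_cases hcb : b = n-1
  · subst hcb
    have hk2 : k = n-1 := by omega
    subst hk2
    rw [show M-(n-1)+(n-1) = M+0 from by omega]
    refine iff_of_true ?_ ⟨rfl, rfl⟩
    exact (shift2 (n+2) (s+(n-1)) 0 (by omega) (by omega)).mpr (g_zero _)
  · refine iff_of_false ?_ (by omega)
    intro hG
    have := (shift (n+2) (s+k) (M-(n-1)+b) (by omega) (by omega)).mp hG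
    exact not_g_of_lt (by omega) this

lemma pupRC_elim {n ρ γ : ℕ} {p : ℕ×ℕ → Bool} (h : p ∈ PupRC n ρ γ) :
    ∃ r a, a ≤ r ∧ r % 2 = ρ ∧ (2*a) % 4 = γ ∧ p = upPattern n r (2*a) := by
  obtain ⟨r, c, hc2, hcr, hr, hc4, hp⟩ := h
  obtain ⟨a, rfl⟩ : ∃ a, c = 2*a := ⟨c/2, by omega⟩
  exact ⟨r, a, by omega, hr, hc4, hp⟩

lemma top_mem_constraint {n ρ γ : ℕ} (hn : 2 ≤ n) (h : topUp ∈ PupRC n ρ γ) : ρ = 1 := by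
  obtain ⟨r, a, _, hr, _, hp⟩ := pupRC_elim h
  have := top_parity_occ hn hp
  omega

lemma bl_mem_constraint {n ρ γ : ℕ} (hn : 2 ≤ n) (h : botleftUp n ∈ PupRC n ρ γ) :
    γ = 2*((ρ+(n-1)) % 2) := by
  obtain ⟨r, a, _, hr, hc, hp⟩ := pupRC_elim h
  have := bl_parity_occ hn hp
  omega

lemma br_mem_constraint {n ρ γ : ℕ} (hn : 2 ≤ n) (h : botrightUp n ∈ PupRC n ρ γ) :
    γ = 2*((n+1) % 2) := by
  obtain ⟨r, a, _, hr, hc, hp⟩ := pupRC_elim h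
  have := br_parity_occ hn hp
  omega

/-- Intersection of two classes with different row parity, same column class. -/
lemma inter_m1_same {n ρ γ ρ' : ℕ} (hn : 2 ≤ n) (hρ : ρ ≠ ρ') {p : ℕ×ℕ → Bool}
    (h : p ∈ PupRC n ρ γ ∩ PupRC n ρ' γ) : p = blankUp ∨ p = botrightUp n := by
  obtain ⟨r, a, har, hr, hc4, hp⟩ := pupRC_elim h.1
  obtain ⟨r', a', har', hr', hc4', hp'⟩ := pupRC_elim h.2
  have hs := sameG_of_eq (hp.symm.trans hp')
  have hupper := m1_upper hn hs (by omega)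
  have hnoBL : ¬ G (r+(n-1)) (a+0) := by
    intro hG
    have hup1 : ¬ G (r+(n-2)) (a+0) := hupper (n-2) 0 (by omega) (by omega) (by omega)
    have c1 : (r+(n-1)) % 2 = a % 2 := by
      have e : r+(n-1) = (r+(n-2))+1 := by omega
      have hG2 : G ((r+(n-2))+1) a := by rw [← e]; simpa using hG
      have hup2 : ¬ G (r+(n-2)) a := by simpa using hup1
      rw [e]; exact bl_parity hG2 hup2
    have hG' := (hs (n-1) 0 (by omega) (by omega)).mp hG
    have hup1' : ¬ G (r'+(n-2)) (a'+0) := fun hx =>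
      (hupper (n-2) 0 (by omega) (by omega) (by omega))
        ((hs (n-2) 0 (by omega) (by omega)).mpr hx)
    have c2 : (r'+(n-1)) % 2 = a' % 2 := by
      have e : r'+(n-1) = (r'+(n-2))+1 := by omega
      have hG2 : G ((r'+(n-2))+1) a' := by rw [← e]; simpa using hG'
      have hup2 : ¬ G (r'+(n-2)) a' := by simpa using hup1'
      rw [e]; exact bl_parity hG2 hup2
    omega
  by_cases hBR : G (r+(n-1)) (a+(n-1))
  · right
    rw [hp]
    apply eq_br (by omega)
    intro k b hk hb
    constructor
    · intro hG
      by_contra hne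
      by_cases hcor : k = n-1 ∧ (b = 0 ∨ b = n-1)
      · obtain ⟨h1, h2⟩ := hcor
        subst h1
        rcases h2 with h2 | h2 <;> subst h2
        · exact hnoBL hG
        · exact hne ⟨rfl, rfl⟩
      · exact hupper k b hk hb hcor hG
    · rintro ⟨rfl, rfl⟩
      exact hBR
  · left
    rw [hp]
    apply eq_blank
    intro k b hk hb hG
    by_cases hcor : k = n-1 ∧ (b = 0 ∨ b = n-1)
    · obtain ⟨h1, h2⟩ := hcor
      subst h1
      rcases h2 with h2 | h2 <;> subst h2
      · exact hnoBL hG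
      · exact hBR hG
    · exact hupper k b hk hb hcor hG

/-- Intersection of two classes with different row parity, different column class. -/
lemma inter_m1_diff {n ρ γ ρ' γ' : ℕ} (hn : 2 ≤ n) (hρ : ρ ≠ ρ')
    (hγv : γ = 0 ∨ γ = 2) (hγv' : γ' = 0 ∨ γ' = 2) (hγ : γ ≠ γ') {p : ℕ×ℕ → Bool}
    (h : p ∈ PupRC n ρ γ ∩ PupRC n ρ' γ') : p = blankUp ∨ p = botleftUp n := by
  obtain ⟨r, a, har, hr, hc4, hp⟩ := pupRC_elim h.1
  obtain ⟨r', a', har', hr', hc4', hp'⟩ := pupRC_elim h.2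
  have hs := sameG_of_eq (hp.symm.trans hp')
  have hupper := m1_upper hn hs (by omega)
  have haa : a % 2 ≠ a' % 2 := by omega
  have hnoBR : ¬ G (r+(n-1)) (a+(n-1)) := by
    intro hG
    have hup1 : ¬ G (r+(n-2)) (a+(n-2)) := hupper (n-2) (n-2) (by omega) (by omega) (by omega)
    have c1 : (a+(n-1)) % 2 = 0 := by
      have e1 : r+(n-1) = (r+(n-2))+1 := by omega
      have e2 : a+(n-1) = (a+(n-2))+1 := by omega
      have hG2 : G ((r+(n-2))+1) ((a+(n-2))+1) := by rw [← e1, ← e2]; exact hG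
      rw [e2]; exact br_parity hG2 hup1
    have hG' := (hs (n-1) (n-1) (by omega) (by omega)).mp hG
    have hup1' : ¬ G (r'+(n-2)) (a'+(n-2)) := fun hx =>
      (hupper (n-2) (n-2) (by omega) (by omega) (by omega))
        ((hs (n-2) (n-2) (by omega) (by omega)).mpr hx)
    have c2 : (a'+(n-1)) % 2 = 0 := by
      have e1 : r'+(n-1) = (r'+(n-2))+1 := by omega
      have e2 : a'+(n-1) = (a'+(n-2))+1 := by omega
      have hG2 : G ((r'+(n-2))+1) ((a'+(n-2))+1) := by rw [← e1, ← e2]; exact hG'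
      rw [e2]; exact br_parity hG2 hup1'
    omega
  by_cases hBL : G (r+(n-1)) (a+0)
  · right
    rw [hp]
    apply eq_bl (by omega)
    intro k b hk hb
    constructor
    · intro hG
      by_contra hne
      by_cases hcor : k = n-1 ∧ (b = 0 ∨ b = n-1)
      · obtain ⟨h1, h2⟩ := hcor
        subst h1
        rcases h2 with h2 | h2 <;> subst h2
        · exact hne ⟨rfl, rfl⟩
        · exact hnoBR hG
      · exact hupper k b hk hb hcor hG
    · rintro ⟨rfl, rfl⟩
      exact hBL
  · left
    rw [hp]
    apply eq_blank
    intro k b hk hb hG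
    by_cases hcor : k = n-1 ∧ (b = 0 ∨ b = n-1)
    · obtain ⟨h1, h2⟩ := hcor
      subst h1
      rcases h2 with h2 | h2 <;> subst h2
      · exact hBL hG
      · exact hnoBR hG
    · exact hupper k b hk hb hcor hG

/-- Intersection of two classes with same row parity, different column class. -/
lemma inter_m2 {n ρ γ γ' : ℕ} (hn : 2 ≤ n)
    (hγv : γ = 0 ∨ γ = 2) (hγv' : γ' = 0 ∨ γ' = 2) (hγ : γ ≠ γ') {p : ℕ×ℕ → Bool}
    (h : p ∈ PupRC n ρ γ ∩ PupRC n ρ γ') : p = blankUp ∨ p = topUp := by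
  obtain ⟨r, a, har, hr, hc4, hp⟩ := pupRC_elim h.1
  obtain ⟨r', a', har', hr', hc4', hp'⟩ := pupRC_elim h.2
  have hs := sameG_of_eq (hp.symm.trans hp')
  have hupper := m2_upper hn hs (by omega) (by omega)
  by_cases htop : G (r+0) (a+0)
  · right
    rw [hp]
    apply eq_top (by omega)
    intro k b hk hb
    constructor
    · intro hG
      by_contra hne
      exact hupper k b hk hb (by tauto) hG
    · rintro ⟨rfl, rfl⟩
      exact htop
  · left
    rw [hp]
    apply eq_blank
    intro k b hk hb hG
    by_cases hcor : k = 0 ∧ b = 0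
    · obtain ⟨h1, h2⟩ := hcor
      subst h1; subst h2
      exact htop hG
    · exact hupper k b hk hb hcor hG

lemma pup_out {n : ℕ} {p : ℕ×ℕ → Bool} (hp : p ∈ Pup n) {q : ℕ×ℕ}
    (h : ¬(q.1 < n ∧ q.2 ≤ 2*q.1)) : p q = false := by
  obtain ⟨r, c, _, _, rfl⟩ := hp
  exact up_eval_out q h

lemma pup_finite {n : ℕ} (hn : 1 ≤ n) : (Pup n).Finite := by
  apply Set.Finite.of_finite_image
    (f := fun (p : ℕ×ℕ → Bool) (q : Fin n × Fin (2*n)) => p (q.1.1, q.2.1))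
  · exact Set.toFinite _
  · intro p hp p' hp' himg
    funext z
    obtain ⟨k, m⟩ := z
    by_cases hw : k < n ∧ m ≤ 2*k
    · have hm : m < 2*n := by omega
      have := congrFun himg (⟨k, hw.1⟩, ⟨m, hm⟩)
      simpa using this
    · rw [pup_out hp hw, pup_out hp' hw]

lemma pup_cover {n : ℕ} :
    Pup n = ((PupRC n 0 0 ∪ PupRC n 1 0) ∪ PupRC n 1 2) ∪ PupRC n 0 2 := by
  ext p
  simp only [Set.mem_union]
  constructor
  · rintro ⟨r, c, h1, h2, h5⟩
    rcases (by omega : r%2 = 0 ∧ c%4 = 0 ∨ r%2 = 1 ∧ c%4 = 0 ∨ r%2 = 1 ∧ c%4 = 2 ∨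
        r%2 = 0 ∧ c%4 = 2) with ⟨u,v⟩|⟨u,v⟩|⟨u,v⟩|⟨u,v⟩
    · exact Or.inl (Or.inl (Or.inl ⟨r,c,h1,h2,u,v,h5⟩))
    · exact Or.inl (Or.inl (Or.inr ⟨r,c,h1,h2,u,v,h5⟩))
    · exact Or.inl (Or.inr ⟨r,c,h1,h2,u,v,h5⟩)
    · exact Or.inr ⟨r,c,h1,h2,u,v,h5⟩
  · rintro (((⟨r,c,h1,h2,_,_,h5⟩ | ⟨r,c,h1,h2,_,_,h5⟩) | ⟨r,c,h1,h2,_,_,h5⟩) |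
      ⟨r,c,h1,h2,_,_,h5⟩) <;> exact ⟨r,c,h1,h2,h5⟩

lemma blank_ne_top : blankUp ≠ topUp := by
  intro h
  have := congrFun h (0,0)
  simp [blankUp, topUp] at this

lemma blank_ne_bl (n : ℕ) : blankUp ≠ botleftUp n := by
  intro h
  have := congrFun h (n-1, 0)
  simp [blankUp, botleftUp] at this

lemma blank_ne_br (n : ℕ) : blankUp ≠ botrightUp n := by
  intro h
  have := congrFun h (n-1, 2*(n-1))
  simp [blankUp, botrightUp] at this

lemma top_ne_bl {n : ℕ} (hn : 2 ≤ n) : topUp ≠ botleftUp n := by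
  intro h
  have := congrFun h (0, 0)
  simp [topUp, botleftUp, Prod.ext_iff] at this
  omega

lemma top_ne_br {n : ℕ} (hn : 2 ≤ n) : topUp ≠ botrightUp n := by
  intro h
  have := congrFun h (0, 0)
  simp [topUp, botrightUp, Prod.ext_iff] at this
  omega

lemma bl_ne_br {n : ℕ} (hn : 2 ≤ n) : botleftUp n ≠ botrightUp n := by
  intro h
  have := congrFun h (n-1, 0)
  simp [botleftUp, botrightUp, Prod.ext_iff] at this
  omega

lemma triple_card {α : Type*} {x y z : α} (h1 : x ≠ y) (h2 : x ≠ z) (h3 : y ≠ z) :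
    ({x, y, z} : Set α).ncard = 3 := by
  rw [Set.ncard_insert_of_notMem (by simp [h1, h2]) ((Set.finite_singleton z).insert y),
    Set.ncard_pair h3]

theorem sierpinski_up_additivity (n : ℕ) (hn : 2 ≤ n) :
    (PupRC n 0 0).ncard + (PupRC n 1 0).ncard + (PupRC n 1 2).ncard + (PupRC n 0 2).ncard
      = (Pup n).ncard + 6 := by
  set A := PupRC n 0 0 with hA
  set B := PupRC n 1 0 with hB
  set C := PupRC n 1 2 with hC
  set D := PupRC n 0 2 with hD
  have hsubA : A ⊆ Pup n := fun p ⟨r,c,h1,h2,_,_,h5⟩ => ⟨r,c,h1,h2,h5⟩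
  have hsubB : B ⊆ Pup n := fun p ⟨r,c,h1,h2,_,_,h5⟩ => ⟨r,c,h1,h2,h5⟩
  have hsubC : C ⊆ Pup n := fun p ⟨r,c,h1,h2,_,_,h5⟩ => ⟨r,c,h1,h2,h5⟩
  have hsubD : D ⊆ Pup n := fun p ⟨r,c,h1,h2,_,_,h5⟩ => ⟨r,c,h1,h2,h5⟩
  have hfin := pup_finite (show 1 ≤ n by omega)
  have finA := hfin.subset hsubA
  have finB := hfin.subset hsubB
  have finC := hfin.subset hsubC
  have finD := hfin.subset hsubD
  have e1 := Set.ncard_union_add_ncard_inter A B finA finB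
  have e2 := Set.ncard_union_add_ncard_inter (A ∪ B) C (finA.union finB) finC
  have e3 := Set.ncard_union_add_ncard_inter ((A ∪ B) ∪ C) D
    ((finA.union finB).union finC) finD
  have hcov : ((A ∪ B) ∪ C) ∪ D = Pup n := pup_cover.symm
  rw [hcov] at e3
  have mbA : blankUp ∈ A := blank_mem hn (by omega) (Or.inl rfl)
  have mbB : blankUp ∈ B := blank_mem hn (by omega) (Or.inl rfl)
  have mbC : blankUp ∈ C := blank_mem hn (by omega) (Or.inr rfl)
  have mbD : blankUp ∈ D := blank_mem hn (by omega) (Or.inr rfl)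
  have mtB : topUp ∈ B := top_mem hn (Or.inl rfl)
  have mtC : topUp ∈ C := top_mem hn (Or.inr rfl)
  rcases (by omega : n % 2 = 1 ∨ n % 2 = 0) with hpar | hpar
  · -- n odd
    have mBR_A : botrightUp n ∈ A := by
      have h := br_mem_aux hn (n+1) (by omega) (by omega)
      rwa [show (n+1)%2 = 0 from by omega, Nat.mul_zero] at h
    have mBR_B : botrightUp n ∈ B := by
      have h := br_mem_aux hn n (by omega) (by omega)
      rwa [show n%2 = 1 from hpar, show (n+1)%2 = 0 from by omega, Nat.mul_zero] at h
    have mBL_A : botleftUp n ∈ A := by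
      have h := bl_mem_aux hn (n+1) (by omega) (by omega)
      rwa [show (n+1)%2 = 0 from by omega, show ((n+1)+n+1)%2 = 0 from by omega,
        Nat.mul_zero] at h
    have mBL_C : botleftUp n ∈ C := by
      have h := bl_mem_aux hn n (by omega) (by omega)
      rwa [show n%2 = 1 from hpar, show (n+n+1)%2 = 1 from by omega,
        show 2*1 = 2 from rfl] at h
    have hX1 : A ∩ B = {blankUp, botrightUp n} := by
      apply Set.Subset.antisymm
      · intro p hp
        rcases inter_m1_same hn (by omega) hp with rfl | rfl
        · exact Set.mem_insert _ _
        · exact Set.mem_insert_of_mem _ rfl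
      · intro p hp
        simp only [Set.mem_insert_iff, Set.mem_singleton_iff] at hp
        rcases hp with rfl | rfl
        · exact ⟨mbA, mbB⟩
        · exact ⟨mBR_A, mBR_B⟩
    have hX2 : (A ∪ B) ∩ C = {blankUp, topUp, botleftUp n} := by
      apply Set.Subset.antisymm
      · rintro p ⟨hab, hc⟩
        rcases hab with ha | hb
        · rcases inter_m1_diff hn (by omega) (Or.inl rfl) (Or.inr rfl) (by omega)
            ⟨ha, hc⟩ with rfl | rfl
          · exact Set.mem_insert _ _
          · exact Set.mem_insert_of_mem _ (Set.mem_insert_of_mem _ rfl)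
        · rcases inter_m2 hn (Or.inl rfl) (Or.inr rfl) (by omega) ⟨hb, hc⟩ with rfl | rfl
          · exact Set.mem_insert _ _
          · exact Set.mem_insert_of_mem _ (Set.mem_insert _ _)
      · intro p hp
        simp only [Set.mem_insert_iff, Set.mem_singleton_iff] at hp
        rcases hp with rfl | rfl | rfl
        · exact ⟨Or.inl mbA, mbC⟩
        · exact ⟨Or.inr mtB, mtC⟩
        · exact ⟨Or.inl mBL_A, mBL_C⟩
    have hX3 : ((A ∪ B) ∪ C) ∩ D = {blankUp} := by
      apply Set.Subset.antisymm
      · rintro p ⟨habc, hd⟩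
        rcases habc with (ha | hb) | hc
        · rcases inter_m2 hn (Or.inl rfl) (Or.inr rfl) (by omega) ⟨ha, hd⟩ with rfl | rfl
          · rfl
          · have := top_mem_constraint hn ha
            omega
        · rcases inter_m1_diff hn (by omega) (Or.inl rfl) (Or.inr rfl) (by omega)
            ⟨hb, hd⟩ with rfl | rfl
          · rfl
          · have := bl_mem_constraint hn hb
            omega
        · rcases inter_m1_same hn (by omega) ⟨hc, hd⟩ with rfl | rfl
          · rfl
          · have := br_mem_constraint hn hc
            omega
      · intro p hp
        rw [Set.mem_singleton_iff] at hp
        subst hp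
        exact ⟨Or.inl (Or.inl mbA), mbD⟩
    have n1 : (A ∩ B).ncard = 2 := by rw [hX1]; exact Set.ncard_pair (blank_ne_br n)
    have n2 : ((A ∪ B) ∩ C).ncard = 3 := by
      rw [hX2]; exact triple_card blank_ne_top (blank_ne_bl n) (top_ne_bl hn)
    have n3 : (((A ∪ B) ∪ C) ∩ D).ncard = 1 := by rw [hX3]; exact Set.ncard_singleton _
    omega
  · -- n even
    have mBR_C : botrightUp n ∈ C := by
      have h := br_mem_aux hn (n+1) (by omega) (by omega)
      rwa [show (n+1)%2 = 1 from by omega, show 2*1 = 2 from rfl] at h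
    have mBR_D : botrightUp n ∈ D := by
      have h := br_mem_aux hn n (by omega) (by omega)
      rwa [show n%2 = 0 from hpar, show (n+1)%2 = 1 from by omega,
        show 2*1 = 2 from rfl] at h
    have mBL_B : botleftUp n ∈ B := by
      have h := bl_mem_aux hn (n+1) (by omega) (by omega)
      rwa [show (n+1)%2 = 1 from by omega, show ((n+1)+n+1)%2 = 0 from by omega,
        Nat.mul_zero] at h
    have mBL_D : botleftUp n ∈ D := by
      have h := bl_mem_aux hn n (by omega) (by omega)
      rwa [show n%2 = 0 from hpar, show (n+n+1)%2 = 1 from by omega,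
        show 2*1 = 2 from rfl] at h
    have hX1 : A ∩ B = {blankUp} := by
      apply Set.Subset.antisymm
      · intro p hp
        rcases inter_m1_same hn (by omega) hp with rfl | rfl
        · rfl
        · have := br_mem_constraint hn hp.1
          omega
      · intro p hp
        rw [Set.mem_singleton_iff] at hp
        subst hp
        exact ⟨mbA, mbB⟩
    have hX2 : (A ∪ B) ∩ C = {blankUp, topUp} := by
      apply Set.Subset.antisymm
      · rintro p ⟨hab, hc⟩
        rcases hab with ha | hb
        · rcases inter_m1_diff hn (by omega) (Or.inl rfl) (Or.inr rfl) (by omega)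
            ⟨ha, hc⟩ with rfl | rfl
          · exact Set.mem_insert _ _
          · have := bl_mem_constraint hn ha
            omega
        · rcases inter_m2 hn (Or.inl rfl) (Or.inr rfl) (by omega) ⟨hb, hc⟩ with rfl | rfl
          · exact Set.mem_insert _ _
          · exact Set.mem_insert_of_mem _ rfl
      · intro p hp
        simp only [Set.mem_insert_iff, Set.mem_singleton_iff] at hp
        rcases hp with rfl | rfl
        · exact ⟨Or.inl mbA, mbC⟩
        · exact ⟨Or.inr mtB, mtC⟩
    have hX3 : ((A ∪ B) ∪ C) ∩ D = {blankUp, botleftUp n, botrightUp n} := by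
      apply Set.Subset.antisymm
      · rintro p ⟨habc, hd⟩
        rcases habc with (ha | hb) | hc
        · rcases inter_m2 hn (Or.inl rfl) (Or.inr rfl) (by omega) ⟨ha, hd⟩ with rfl | rfl
          · exact Set.mem_insert _ _
          · have := top_mem_constraint hn ha
            omega
        · rcases inter_m1_diff hn (by omega) (Or.inl rfl) (Or.inr rfl) (by omega)
            ⟨hb, hd⟩ with rfl | rfl
          · exact Set.mem_insert _ _
          · exact Set.mem_insert_of_mem _ (Set.mem_insert _ _)
        · rcases inter_m1_same hn (by omega) ⟨hc, hd⟩ with rfl | rfl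
          · exact Set.mem_insert _ _
          · exact Set.mem_insert_of_mem _ (Set.mem_insert_of_mem _ rfl)
      · intro p hp
        simp only [Set.mem_insert_iff, Set.mem_singleton_iff] at hp
        rcases hp with rfl | rfl | rfl
        · exact ⟨Or.inl (Or.inl mbA), mbD⟩
        · exact ⟨Or.inl (Or.inr mBL_B), mBL_D⟩
        · exact ⟨Or.inr mBR_C, mBR_D⟩
    have n1 : (A ∩ B).ncard = 1 := by rw [hX1]; exact Set.ncard_singleton _
    have n2 : ((A ∪ B) ∩ C).ncard = 2 := by rw [hX2]; exact Set.ncard_pair blank_ne_top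
    have n3 : (((A ∪ B) ∪ C) ∩ D).ncard = 3 := by
      rw [hX3]; exact triple_card (blank_ne_bl n) (blank_ne_br n) (bl_ne_br hn)
    omega
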